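/- Let q = (q_0, ..., q_5) ∈ ℤ^6 with q_0 + ... + q_5 = 0, q_0 ≤ q_1 ≤ ... ≤ q_5, and |q_2| ≤ q_3. Then q satisfies the positive curvature condition (i.e. there exists i_0 ∈ {0,...,5} such that q_i + q_j > 0 for all pairs i < j with i,j ≠ i_0, or q_i + q_j < 0 for all such pairs) if and only if q_1 + q_2 > 0. -/
import Mathlib


/-- The `k`-th elementary symmetric polynomial of the tuple `q`. -/
def esymm {n : ℕ} (k : ℕ) (q : Fin n → ℤ) : ℤ :=
  ∑ t ∈ Finset.univ.powersetCard k, ∏ i ∈ t, q i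

/-- The Bazaikin freeness condition: the entries sum to zero, all entries are odd,
and `gcd (q a + q b, q c + q d) = 2` for all pairwise distinct indices `a b c d`. -/
def BazaikinFree (q : Fin 6 → ℤ) : Prop :=
  (∑ i, q i) = 0 ∧ (∀ i, Odd (q i)) ∧
    ∀ a b c d : Fin 6, a ≠ b → a ≠ c → a ≠ d → b ≠ c → b ≠ d → c ≠ d →
      Int.gcd (q a + q b) (q c + q d) = 2

/-- The positive curvature condition: there is an index `i₀` such that
`q i + q j > 0` for all pairs `i < j` avoiding `i₀`, or `q i + q j < 0` for all such pairs. -/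
def PosCurv (q : Fin 6 → ℤ) : Prop :=
  ∃ i₀ : Fin 6,
    (∀ i j : Fin 6, i < j → i ≠ i₀ → j ≠ i₀ → 0 < q i + q j) ∨
    (∀ i j : Fin 6, i < j → i ≠ i₀ → j ≠ i₀ → q i + q j < 0)

theorem posCurv_iff_of_sorted (q : Fin 6 → ℤ) (hsum : (∑ i, q i) = 0)
    (hmono : Monotone q) (habs : |q 2| ≤ q 3) :
    PosCurv q ↔ 0 < q 1 + q 2 := by
  rw [Fin.sum_univ_six] at hsum
  obtain ⟨hn, hp⟩ := abs_le.mp habs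
  have h01 : q 0 ≤ q 1 := hmono (by decide)
  have h12 : q 1 ≤ q 2 := hmono (by decide)
  have h23 : q 2 ≤ q 3 := hmono (by decide)
  have h34 : q 3 ≤ q 4 := hmono (by decide)
  have h45 : q 4 ≤ q 5 := hmono (by decide)
  constructor
  · rintro ⟨i₀, h | h⟩
    · fin_cases i₀
      · linarith [h 1 2 (by decide) (by decide) (by decide)]
      · linarith [h 0 2 (by decide) (by decide) (by decide)]
      · linarith [h 0 1 (by decide) (by decide) (by decide),
          h 4 5 (by decide) (by decide) (by decide)]
      · linarith [h 1 2 (by decide) (by decide) (by decide)]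
      · linarith [h 1 2 (by decide) (by decide) (by decide)]
      · linarith [h 1 2 (by decide) (by decide) (by decide)]
    · fin_cases i₀
      · linarith [h 4 5 (by decide) (by decide) (by decide)]
      · linarith [h 4 5 (by decide) (by decide) (by decide)]
      · linarith [h 4 5 (by decide) (by decide) (by decide)]
      · linarith [h 4 5 (by decide) (by decide) (by decide)]
      · linarith [h 3 5 (by decide) (by decide) (by decide)]
      · linarith [h 3 4 (by decide) (by decide) (by decide)]
  · intro hq
    refine ⟨0, Or.inl fun i j hij hi hj => ?_⟩
    have hiv : 1 ≤ i.val := by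
      rcases Nat.eq_zero_or_pos i.val with h | h
      · exact absurd (Fin.ext h) hi
      · exact h
    have hjv : 2 ≤ j.val := by
      have := Fin.lt_def.mp hij; omega
    have hqi : q 1 ≤ q i := hmono (Fin.le_def.mpr (by simpa using hiv))
    have hqj : q 2 ≤ q j := hmono (Fin.le_def.mpr (by simpa using hjv))
    linarith
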